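/- Let d ≥ 1, λ > 0, σ > 0, θ = λσ², 0 ≤ x ≤ L, and define T(x) = (1/(λ^(d/2) σ²)) ∫ₓᴸ z^(1-d) e^(λ z²) γ(d/2, λ z²) dz. Then T(x) ≤ (1/θ)·(e^(λ L²) − e^(λ x²))/d. -/

import Mathlib

noncomputable def lowerGamma (a x : ℝ) : ℝ := ∫ t in (0:ℝ)..x, t ^ (a - 1) * Real.exp (-t)

noncomputable def mfet (d : ℕ) (lam σ x L : ℝ) : ℝ :=
  (1 / (lam ^ ((d : ℝ) / 2) * σ ^ 2)) *
    ∫ z in x..L, z ^ ((1 : ℝ) - d) * Real.exp (lam * z ^ 2) * lowerGamma ((d : ℝ) / 2) (lam * z ^ 2)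

lemma lowerGamma_nonneg (a y : ℝ) (hy : 0 ≤ y) : 0 ≤ lowerGamma a y := by
  apply intervalIntegral.integral_nonneg hy
  intro t ht
  exact mul_nonneg (Real.rpow_nonneg ht.1 _) (Real.exp_pos _).le

lemma lowerGamma_le (a y : ℝ) (ha : 0 < a) (hy : 0 ≤ y) : lowerGamma a y ≤ y ^ a / a := by
  have hint1 : IntervalIntegrable (fun t : ℝ => t ^ (a - 1)) MeasureTheory.volume 0 y :=
    intervalIntegral.intervalIntegrable_rpow' (by linarith)
  have hint2 : IntervalIntegrable (fun t : ℝ => t ^ (a - 1) * Real.exp (-t))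
      MeasureTheory.volume 0 y := by
    apply hint1.mono_fun
    · exact ((measurable_id.pow_const _).mul
        (Real.measurable_exp.comp measurable_neg)).aestronglyMeasurable
    · filter_upwards [MeasureTheory.ae_restrict_mem measurableSet_uIoc] with t ht
      have ht0 : 0 < t := by
        have h := ht.1
        rwa [inf_eq_left.mpr hy] at h
      have h1 : (0:ℝ) ≤ t ^ (a - 1) := Real.rpow_nonneg ht0.le _
      have h2 : Real.exp (-t) ≤ 1 := Real.exp_le_one_iff.mpr (by linarith)
      simp only [Real.norm_eq_abs, abs_mul, abs_of_nonneg h1, abs_of_nonneg (Real.exp_pos _).le]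
      nlinarith [Real.exp_pos (-t)]
  calc lowerGamma a y ≤ ∫ t in (0:ℝ)..y, t ^ (a - 1) := by
        apply intervalIntegral.integral_mono_on hy hint2 hint1
        intro t ht
        have h1 : (0:ℝ) ≤ t ^ (a - 1) := Real.rpow_nonneg ht.1 _
        have h2 : Real.exp (-t) ≤ 1 := Real.exp_le_one_iff.mpr (by linarith [ht.1])
        nlinarith [Real.exp_pos (-t)]
    _ = y ^ a / a := by
        rw [integral_rpow (Or.inl (by linarith))]
        rw [sub_add_cancel, Real.zero_rpow (ne_of_gt ha)]
        ring

theorem mfet_upper_bound_crude (d : ℕ) (hd : 1 ≤ d) (lam σ θ x L : ℝ) (hlam : 0 < lam)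
    (hσ : 0 < σ) (hθ : θ = lam * σ ^ 2) (hx : 0 ≤ x) (hxL : x ≤ L) :
    mfet d lam σ x L ≤ (1 / θ) * (Real.exp (lam * L ^ 2) - Real.exp (lam * x ^ 2)) / d := by
  have hd0 : (0:ℝ) < d := by exact_mod_cast hd
  set C : ℝ := 2 * lam ^ ((d : ℝ) / 2) / d with hC
  have hCpos : 0 < C := by positivity
  set E : ℝ := Real.exp (lam * L ^ 2) - Real.exp (lam * x ^ 2) with hE
  have hE0 : 0 ≤ E := by
    have : Real.exp (lam * x ^ 2) ≤ Real.exp (lam * L ^ 2) := by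
      apply Real.exp_le_exp.mpr
      have : x ^ 2 ≤ L ^ 2 := by nlinarith
      nlinarith
    linarith
  -- pointwise bound
  have hpt : ∀ z ∈ Set.Icc x L,
      z ^ ((1 : ℝ) - d) * Real.exp (lam * z ^ 2) * lowerGamma ((d : ℝ) / 2) (lam * z ^ 2)
        ≤ C * (z * Real.exp (lam * z ^ 2)) := by
    intro z hz
    have hz0 : 0 ≤ z := le_trans hx hz.1
    rcases eq_or_lt_of_le hz0 with h0 | h0
    · rw [← h0]
      simp [lowerGamma]
    · have hγ : lowerGamma ((d : ℝ) / 2) (lam * z ^ 2)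
          ≤ (lam * z ^ 2) ^ ((d : ℝ) / 2) / ((d : ℝ) / 2) :=
        lowerGamma_le _ _ (by positivity) (by positivity)
      have hpow : (lam * z ^ 2) ^ ((d : ℝ) / 2) = lam ^ ((d : ℝ) / 2) * z ^ (d : ℝ) := by
        rw [Real.mul_rpow hlam.le (by positivity)]
        congr 1
        rw [← Real.rpow_natCast z 2, ← Real.rpow_mul hz0]
        congr 1
        ring
      have key : z ^ ((1 : ℝ) - d) * (lam ^ ((d : ℝ) / 2) * z ^ (d : ℝ))
          = lam ^ ((d:ℝ)/2) * z := by
        rw [mul_comm (lam ^ ((d:ℝ)/2)) (z ^ (d:ℝ)), ← mul_assoc, ← Real.rpow_add h0]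
        norm_num
        ring
      calc z ^ ((1 : ℝ) - d) * Real.exp (lam * z ^ 2) * lowerGamma ((d : ℝ) / 2) (lam * z ^ 2)
          ≤ z ^ ((1 : ℝ) - d) * Real.exp (lam * z ^ 2) *
              ((lam * z ^ 2) ^ ((d : ℝ) / 2) / ((d : ℝ) / 2)) :=
            mul_le_mul_of_nonneg_left hγ (by positivity)
        _ = (z ^ ((1:ℝ) - d) * (lam ^ ((d:ℝ)/2) * z ^ (d:ℝ))) *
              Real.exp (lam * z ^ 2) / ((d:ℝ)/2) := by rw [hpow]; ring
        _ = lam ^ ((d:ℝ)/2) * z * Real.exp (lam * z ^ 2) / ((d:ℝ)/2) := by rw [key]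
        _ = C * (z * Real.exp (lam * z ^ 2)) := by
            rw [hC]; field_simp
  -- integral of the dominating function
  have hcont : Continuous fun z : ℝ => z * Real.exp (lam * z ^ 2) := by continuity
  have hIg : ∫ z in x..L, z * Real.exp (lam * z ^ 2) = E / (2 * lam) := by
    have hder : ∀ z ∈ Set.uIcc x L,
        HasDerivAt (fun z : ℝ => Real.exp (lam * z ^ 2) / (2 * lam))
          (z * Real.exp (lam * z ^ 2)) z := by
      intro z _
      have h1 : HasDerivAt (fun z : ℝ => lam * z ^ 2) (lam * (2 * z)) z := by
        simpa using (hasDerivAt_pow 2 z).const_mul lam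
      have h2 := (h1.exp).div_const (2 * lam)
      refine h2.congr_deriv ?_
      rw [div_eq_iff (by positivity)]
      ring
    rw [intervalIntegral.integral_eq_sub_of_hasDerivAt hder (hcont.intervalIntegrable x L)]
    rw [hE]
    ring
  have hgint : IntervalIntegrable (fun z : ℝ => C * (z * Real.exp (lam * z ^ 2)))
      MeasureTheory.volume x L := (continuous_const.mul hcont).intervalIntegrable x L
  have hIgC : ∫ z in x..L, C * (z * Real.exp (lam * z ^ 2)) = C * (E / (2 * lam)) := by
    rw [intervalIntegral.integral_const_mul, hIg]
  have hmain : (∫ z in x..L,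
      z ^ ((1 : ℝ) - d) * Real.exp (lam * z ^ 2) * lowerGamma ((d : ℝ) / 2) (lam * z ^ 2))
        ≤ C * (E / (2 * lam)) := by
    by_cases hf : IntervalIntegrable (fun z : ℝ =>
        z ^ ((1 : ℝ) - d) * Real.exp (lam * z ^ 2) * lowerGamma ((d : ℝ) / 2) (lam * z ^ 2))
        MeasureTheory.volume x L
    · calc (∫ z in x..L, z ^ ((1 : ℝ) - d) * Real.exp (lam * z ^ 2) *
            lowerGamma ((d : ℝ) / 2) (lam * z ^ 2))
          ≤ ∫ z in x..L, C * (z * Real.exp (lam * z ^ 2)) :=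
            intervalIntegral.integral_mono_on hxL hf hgint hpt
        _ = C * (E / (2 * lam)) := hIgC
    · rw [intervalIntegral.integral_undef hf]
      positivity
  -- conclude
  rw [mfet, hθ]
  have hpref : 0 < 1 / (lam ^ ((d : ℝ) / 2) * σ ^ 2) := by positivity
  calc (1 / (lam ^ ((d : ℝ) / 2) * σ ^ 2)) *
        ∫ z in x..L, z ^ ((1 : ℝ) - d) * Real.exp (lam * z ^ 2) *
          lowerGamma ((d : ℝ) / 2) (lam * z ^ 2)
      ≤ (1 / (lam ^ ((d : ℝ) / 2) * σ ^ 2)) * (C * (E / (2 * lam))) :=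
        mul_le_mul_of_nonneg_left hmain hpref.le
    _ = (1 / (lam * σ ^ 2)) * E / d := by
        rw [hC]
        have h1 : lam ^ ((d : ℝ) / 2) ≠ 0 := by positivity
        field_simp
    _ = (1 / (lam * σ ^ 2)) * (Real.exp (lam * L ^ 2) - Real.exp (lam * x ^ 2)) / d := by
        rw [hE]
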